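/- Let H be a Hopf algebra with coproduct Δ, ρ : H → S ⊗ H a coaction with cointeraction m^{1,3}(ρ ⊗ ρ)Δ = (id ⊗ Δ)ρ, S a commutative bialgebra, and let ℓ be a character of S with M_ℓ = (ℓ ⊗ id)ρ. Suppose (X_{st}) are characters of H with Chen's identity. Then for all x, y, t: (X_{yx} ∘ M_ℓ) ∗ (X_{xt} ∘ M_ℓ) = X_{yt} ∘ M_ℓ, i.e. the translated/renormalised family again satisfies Chen's identity. -/
import Mathlib


set_option autoImplicit false

open TensorProduct

/-- Convolution of linear functionals on a coalgebra: `(f ∗ g)(x) = (f ⊗ g)(Δ x)`. -/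
noncomputable def convF (k H : Type*) [CommRing k] [AddCommGroup H] [Module k H]
    [Coalgebra k H] (f g : H →ₗ[k] k) : H →ₗ[k] k :=
  TensorProduct.lift (((LinearMap.mul k k).comp f).compl₂ g) ∘ₗ
    Coalgebra.comul (R := k) (A := H)

/-- `Γ_g = (g ⊗ id) ∘ Δ` for a linear functional `g` on a coalgebra. -/
noncomputable def GammaF (k H : Type*) [CommRing k] [AddCommGroup H] [Module k H]
    [Coalgebra k H] (g : H →ₗ[k] k) : H →ₗ[k] H :=
  (TensorProduct.lid k H).toLinearMap ∘ₗ TensorProduct.map g LinearMap.id ∘ₗ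
    Coalgebra.comul (R := k) (A := H)

/-- `M_ℓ = (ℓ ⊗ id) ∘ ρ`, the renormalisation map attached to a coaction `ρ` and a
character `ℓ`. -/
noncomputable def Ml (k H S : Type*) [CommRing k] [AddCommGroup H] [Module k H]
    [CommRing S] [Algebra k S] (ρ : H →ₗ[k] S ⊗[k] H) (ℓ : S →ₐ[k] k) : H →ₗ[k] H :=
  (TensorProduct.lid k H).toLinearMap ∘ₗ TensorProduct.map ℓ.toLinearMap LinearMap.id ∘ₗ ρ


section aux
variable (k H S : Type*) [CommRing k] [AddCommGroup H] [Module k H] [Coalgebra k H]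
  [CommRing S] [Algebra k S] (ρ : H →ₗ[k] S ⊗[k] H) (ℓ : S →ₐ[k] k)

lemma Ml_aux1 (t : S ⊗[k] H) :
    Coalgebra.comul (R := k) ((TensorProduct.lid k H) (TensorProduct.map ℓ.toLinearMap LinearMap.id t))
      = (TensorProduct.lid k (H ⊗[k] H))
          (TensorProduct.map ℓ.toLinearMap LinearMap.id
            (TensorProduct.map LinearMap.id (Coalgebra.comul (R := k) (A := H)) t)) := by
  induction t using TensorProduct.induction_on with
  | zero => simp
  | tmul s a => simp [TensorProduct.smul_tmul']
  | add p q hp hq => simp_all [map_add]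

lemma Ml_aux2 (p q : S ⊗[k] H) :
    (TensorProduct.lid k (H ⊗[k] H))
      (TensorProduct.map ℓ.toLinearMap LinearMap.id
        (TensorProduct.map (LinearMap.mul' k S) LinearMap.id
          (TensorProduct.tensorTensorTensorComm k S H S H (p ⊗ₜ[k] q))))
    = ((TensorProduct.lid k H) (TensorProduct.map ℓ.toLinearMap LinearMap.id p)) ⊗ₜ[k]
        ((TensorProduct.lid k H) (TensorProduct.map ℓ.toLinearMap LinearMap.id q)) := by
  induction p using TensorProduct.induction_on with
  | zero => simp [TensorProduct.zero_tmul]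
  | add a b ha hb => simp_all [TensorProduct.add_tmul, TensorProduct.add_tmul, map_add]
  | tmul s a =>
    induction q using TensorProduct.induction_on with
    | zero => simp [TensorProduct.tmul_zero]
    | add c d hc hd => simp_all [TensorProduct.tmul_add, map_add]
    | tmul u b =>
      rw [tensorTensorTensorComm_tmul]
      simp only [TensorProduct.map_tmul, LinearMap.mul'_apply, LinearMap.id_coe, id_eq,
        AlgHom.toLinearMap_apply, map_mul, TensorProduct.lid_tmul]
      rw [TensorProduct.smul_tmul', TensorProduct.smul_tmul, ← TensorProduct.smul_tmul',
        mul_smul]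
      rw [TensorProduct.tmul_smul, TensorProduct.tmul_smul]
end aux

theorem comul_Ml (k H S : Type*) [CommRing k] [AddCommGroup H] [Module k H] [Coalgebra k H]
    [CommRing S] [Bialgebra k S] (ρ : H →ₗ[k] S ⊗[k] H)
    (hcointer : ∀ x : H,
      (TensorProduct.map (LinearMap.mul' k S) LinearMap.id)
        ((TensorProduct.tensorTensorTensorComm k S H S H)
          ((TensorProduct.map ρ ρ) (Coalgebra.comul (R := k) x)))
      = (TensorProduct.map LinearMap.id (Coalgebra.comul (R := k) (A := H))) (ρ x))
    (ℓ : S →ₐ[k] k) (h : H) :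
    Coalgebra.comul (R := k) (Ml k H S ρ ℓ h)
      = TensorProduct.map (Ml k H S ρ ℓ) (Ml k H S ρ ℓ) (Coalgebra.comul (R := k) h) := by
  rw [Ml]
  simp only [LinearMap.comp_apply, LinearEquiv.coe_coe]
  rw [Ml_aux1 k H S ℓ (ρ h), ← hcointer h]
  generalize Coalgebra.comul (R := k) h = u
  induction u using TensorProduct.induction_on with
  | zero => simp
  | add a b ha hb => simp_all [map_add]
  | tmul a b =>
    simp only [TensorProduct.map_tmul]
    rw [Ml_aux2 k H S ℓ (ρ a) (ρ b)]
    simp [Ml]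

/-- The translated/renormalised family `X_{st} ∘ M_ℓ` again satisfies Chen's identity:
`(X_{yx} ∘ M_ℓ) ∗ (X_{xt} ∘ M_ℓ) = X_{yt} ∘ M_ℓ`. -/
theorem stmt_17 (k H S : Type*) [CommRing k] [Ring H] [Bialgebra k H] [HopfAlgebra k H]
    [CommRing S] [Bialgebra k S]
    (ρ : H →ₗ[k] S ⊗[k] H)
    (hcoassoc : ∀ x : H, (TensorProduct.assoc k S S H)
        ((TensorProduct.map (Coalgebra.comul (R := k) (A := S)) LinearMap.id) (ρ x))
      = (TensorProduct.map LinearMap.id ρ) (ρ x))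
    (hcounit : ∀ x : H, (TensorProduct.lid k H)
        ((TensorProduct.map (Coalgebra.counit (R := k) (A := S)) LinearMap.id) (ρ x)) = x)
    (hcointer : ∀ x : H,
      (TensorProduct.map (LinearMap.mul' k S) LinearMap.id)
        ((TensorProduct.tensorTensorTensorComm k S H S H)
          ((TensorProduct.map ρ ρ) (Coalgebra.comul (R := k) x)))
      = (TensorProduct.map LinearMap.id (Coalgebra.comul (R := k) (A := H))) (ρ x))
    (ℓ : S →ₐ[k] k)
    (X : ℝ → ℝ → (H →ₐ[k] k))
    (chen : ∀ s u t : ℝ,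
      convF k H (X s u).toLinearMap (X u t).toLinearMap = (X s t).toLinearMap) :
    ∀ x y t : ℝ,
      convF k H ((X y x).toLinearMap ∘ₗ Ml k H S ρ ℓ)
          ((X x t).toLinearMap ∘ₗ Ml k H S ρ ℓ)
        = (X y t).toLinearMap ∘ₗ Ml k H S ρ ℓ := by
  intro x y t
  ext h
  rw [← chen y x t]
  simp only [convF, LinearMap.comp_apply]
  rw [comul_Ml k H S ρ hcointer ℓ h]
  generalize Coalgebra.comul (R := k) h = u
  induction u using TensorProduct.induction_on with
  | zero => simp
  | add a b ha hb => simp_all [map_add]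
  | tmul a b => simp
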